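/- Let 𝓛 ∈ {EL5⁻, EL5, EkL5⁻, EkL5 | k ∈ {4,5,6}} and let (M,γ) be an algebraic 𝓛-interpretation. Then there exists a relational model K = (F,g) based on an 𝓛-frame such that for all formulas φ ∈ Fm: (M,γ) ⊨ φ if and only if K ⊨ φ. -/
import Mathlib


/-- Formulas of the full modal-epistemic language `Fm`. -/
inductive Fm : Type
  | var : Nat → Fm
  | bot : Fm
  | and : Fm → Fm → Fm
  | or : Fm → Fm → Fm
  | imp : Fm → Fm → Fm
  | box : Fm → Fm
  | k : Fm → Fm

namespace Fm

def neg (φ : Fm) : Fm := φ.imp Fm.bot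

def top : Fm := Fm.neg Fm.bot

def biimp (φ ψ : Fm) : Fm := (φ.imp ψ).and (ψ.imp φ)

/-- Propositional identity as strict equivalence: `φ ≡ ψ := □(φ↔ψ)`. -/
def equiv (φ ψ : Fm) : Fm := Fm.box (Fm.biimp φ ψ)

def diam (φ : Fm) : Fm := Fm.neg (Fm.box (Fm.neg φ))

end Fm

/-- Hilbert-style axiom schemes for intuitionistic propositional logic,
instantiated over the full language (so that together with closure under MP
this yields exactly all substitution-instances of theorems of IPC). -/
inductive IPCAx : Fm → Prop
  | k1 (φ ψ : Fm) : IPCAx (φ.imp (ψ.imp φ))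
  | k2 (φ ψ χ : Fm) : IPCAx ((φ.imp (ψ.imp χ)).imp ((φ.imp ψ).imp (φ.imp χ)))
  | andI (φ ψ : Fm) : IPCAx (φ.imp (ψ.imp (φ.and ψ)))
  | andE1 (φ ψ : Fm) : IPCAx ((φ.and ψ).imp φ)
  | andE2 (φ ψ : Fm) : IPCAx ((φ.and ψ).imp ψ)
  | orI1 (φ ψ : Fm) : IPCAx (φ.imp (φ.or ψ))
  | orI2 (φ ψ : Fm) : IPCAx (ψ.imp (φ.or ψ))
  | orE (φ ψ χ : Fm) : IPCAx ((φ.imp χ).imp ((ψ.imp χ).imp ((φ.or ψ).imp χ)))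
  | efq (φ : Fm) : IPCAx (Fm.bot.imp φ)

/-- Scheme (INT): all theorems of IPC and their substitution-instances. -/
inductive IPCThm : Fm → Prop
  | ax {φ : Fm} : IPCAx φ → IPCThm φ
  | mp {φ ψ : Fm} : IPCThm (φ.imp ψ) → IPCThm φ → IPCThm ψ

/-- A specification of a logic of the hierarchy: all logics contain (INT), (A1),
(A2), (A3); the flags indicate which further axiom schemes are present. -/
structure LogicSpec : Type where
  hasA4 : Prop
  hasA5 : Prop
  hasKBel : Prop
  hasCoRe : Prop
  hasIntRe : Prop
  hasE4 : Prop
  hasE5 : Prop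
  hasPNB : Prop
  hasNNB : Prop

/-- The axioms of the logic specified by `S`. -/
inductive IsAxiom (S : LogicSpec) : Fm → Prop
  | int {φ : Fm} : IPCThm φ → IsAxiom S φ
  | a1 (φ ψ : Fm) : IsAxiom S ((Fm.box (φ.or ψ)).imp ((Fm.box φ).or (Fm.box ψ)))
  | a2 (φ : Fm) : IsAxiom S ((Fm.box φ).imp φ)
  | a3 (φ ψ : Fm) : IsAxiom S ((Fm.box (φ.imp ψ)).imp (Fm.box ((Fm.box φ).imp (Fm.box ψ))))
  | a4 (φ : Fm) : S.hasA4 → IsAxiom S ((Fm.box φ).imp (Fm.box (Fm.box φ)))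
  | a5 (φ : Fm) : S.hasA5 → IsAxiom S ((Fm.neg (Fm.box φ)).imp (Fm.box (Fm.neg (Fm.box φ))))
  | kbel (φ ψ : Fm) : S.hasKBel → IsAxiom S ((Fm.k (φ.imp ψ)).imp ((Fm.k φ).imp (Fm.k ψ)))
  | core (φ : Fm) : S.hasCoRe → IsAxiom S ((Fm.box φ).imp (Fm.box (Fm.k φ)))
  | intre (φ : Fm) : S.hasIntRe → IsAxiom S ((Fm.k φ).imp (Fm.neg (Fm.neg φ)))
  | e4 (φ : Fm) : S.hasE4 → IsAxiom S ((Fm.k φ).imp (Fm.k (Fm.k φ)))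
  | e5 (φ : Fm) : S.hasE5 → IsAxiom S ((Fm.neg (Fm.k φ)).imp (Fm.k (Fm.neg (Fm.k φ))))
  | pnb (φ : Fm) : S.hasPNB → IsAxiom S ((Fm.k φ).imp (Fm.box (Fm.k φ)))
  | nnb (φ : Fm) : S.hasNNB → IsAxiom S ((Fm.neg (Fm.k φ)).imp (Fm.box (Fm.neg (Fm.k φ))))

/-- Derivations from the hypotheses `Φ` over the axiom set `Ax`.  The parameter
`tnd` controls whether instances of the theorem scheme (TND) `φ ∨ ¬φ` may be
used.  The rules are Modus Ponens (MP) and Axiom Necessitation (AN), the latter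
applying to axioms only (not to (TND) instances nor to theorems). -/
inductive Deriv (Ax : Fm → Prop) (tnd : Prop) (Φ : Set Fm) : Fm → Prop
  | ax {φ : Fm} : Ax φ → Deriv Ax tnd Φ φ
  | hyp {φ : Fm} : φ ∈ Φ → Deriv Ax tnd Φ φ
  | tnd (φ : Fm) : tnd → Deriv Ax tnd Φ (φ.or (Fm.neg φ))
  | an {φ : Fm} : Ax φ → Deriv Ax tnd Φ (Fm.box φ)
  | mp {φ ψ : Fm} : Deriv Ax tnd Φ (φ.imp ψ) → Deriv Ax tnd Φ φ → Deriv Ax tnd Φ ψ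

/-- `Φ ⊢_S φ`. -/
def Derives (S : LogicSpec) (Φ : Set Fm) (φ : Fm) : Prop := Deriv (IsAxiom S) True Φ φ

/-- `⊢_S φ`. -/
def Thm (S : LogicSpec) (φ : Fm) : Prop := Derives S ∅ φ

/-- The modal logic `Ln` (n ∈ {3,4,5}): (INT)+(A1)+(A2)+(A3), plus (A4) if n ≥ 4
and (A5) if n ≥ 5. -/
def Lspec (n : Nat) : LogicSpec :=
  ⟨4 ≤ n, 5 ≤ n, False, False, False, False, False, False, False⟩

/-- `ELn⁻ = Ln + (KBel) + (CoRe)`. -/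
def ELmSpec (n : Nat) : LogicSpec :=
  ⟨4 ≤ n, 5 ≤ n, True, True, False, False, False, False, False⟩

/-- `E4Ln⁻ = ELn⁻ + (E4)`. -/
def E4LmSpec (n : Nat) : LogicSpec := { ELmSpec n with hasE4 := True }

/-- `E5Ln⁻ = E4Ln⁻ + (E5)`. -/
def E5LmSpec (n : Nat) : LogicSpec := { E4LmSpec n with hasE5 := True }

/-- `E6Ln⁻ = ELn⁻ + (PNB) + (NNB)`. -/
def E6LmSpec (n : Nat) : LogicSpec := { ELmSpec n with hasPNB := True, hasNNB := True }

/-- `ELn = ELn⁻ + (IntRe)`. -/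
def ELSpec (n : Nat) : LogicSpec := { ELmSpec n with hasIntRe := True }

def E4LSpec (n : Nat) : LogicSpec := { E4LmSpec n with hasIntRe := True }

def E5LSpec (n : Nat) : LogicSpec := { E5LmSpec n with hasIntRe := True }

def E6LSpec (n : Nat) : LogicSpec := { E6LmSpec n with hasIntRe := True }

/-- Membership in the hierarchy of logics considered in the paper. -/
def InHierarchy (S : LogicSpec) : Prop :=
  ∃ n, n ∈ ({3, 4, 5} : Set Nat) ∧
    (S = Lspec n ∨ S = ELmSpec n ∨ S = E4LmSpec n ∨ S = E5LmSpec n ∨ S = E6LmSpec n ∨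
      S = ELSpec n ∨ S = E4LSpec n ∨ S = E5LSpec n ∨ S = E6LSpec n)

/-- The S5-style logics: `EL5⁻`, `EL5`, `EkL5⁻`, `EkL5` for k ∈ {4,5,6}. -/
def L5Logics : Set LogicSpec :=
  {ELmSpec 5, E4LmSpec 5, E5LmSpec 5, E6LmSpec 5, ELSpec 5, E4LSpec 5, E5LSpec 5, E6LSpec 5}
/-- A filter of a Heyting algebra: a nonempty, upward-closed subset closed under meets. -/
def IsHFilter {H : Type*} [HeytingAlgebra H] (F : Set H) : Prop :=
  F.Nonempty ∧ (∀ ⦃a b : H⦄, a ∈ F → a ≤ b → b ∈ F) ∧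
    (∀ ⦃a b : H⦄, a ∈ F → b ∈ F → a ⊓ b ∈ F)

/-- A proper filter: a filter which is not the whole algebra. -/
def IsProperHFilter {H : Type*} [HeytingAlgebra H] (F : Set H) : Prop :=
  IsHFilter F ∧ F ≠ Set.univ

/-- A prime filter: a proper filter such that `a ⊔ b ∈ F` implies `a ∈ F` or `b ∈ F`. -/
def IsPrimeHFilter {H : Type*} [HeytingAlgebra H] (F : Set H) : Prop :=
  IsProperHFilter F ∧ ∀ a b : H, a ⊔ b ∈ F → a ∈ F ∨ b ∈ F

/-- An ultrafilter: a maximal proper filter. -/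
def IsUltraHFilter {H : Type*} [HeytingAlgebra H] (F : Set H) : Prop :=
  IsProperHFilter F ∧ ∀ G : Set H, IsProperHFilter G → F ⊆ G → G = F
/-- The raw data of an algebraic model: a Heyting algebra together with a
designated set `TRUE` and unary operations `fbox` (for `□`) and `fK` (for `K`). -/
structure PreModel (M : Type*) [HeytingAlgebra M] where
  TRUE : Set M
  fbox : M → M
  fK : M → M

/-- An `EL3⁻`-model: `TRUE` is an ultrafilter and the truth conditions (i)–(vi) hold. -/
def IsEL3mModel {M : Type*} [HeytingAlgebra M] (S : PreModel M) : Prop :=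
  IsUltraHFilter S.TRUE ∧
  (∀ m m' : M, S.fbox (m ⊔ m') ≤ S.fbox m ⊔ S.fbox m') ∧
  (∀ m : M, S.fbox m ≤ m) ∧
  (∀ m m' : M, S.fbox (m ⇨ m') ≤ S.fbox (S.fbox m ⇨ S.fbox m')) ∧
  (∀ m : M, S.fbox m ∈ S.TRUE ↔ m = ⊤) ∧
  (∀ m m' : M, S.fK (m ⇨ m') ≤ S.fK m ⇨ S.fK m') ∧
  (∀ m : M, S.fbox m ≤ S.fbox (S.fK m))

/-- An `EL5⁻`-model: an `EL3⁻`-model where `fbox ⊤ = ⊤` and `fbox m = ⊥` for `m ≠ ⊤`. -/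
def IsEL5mModel {M : Type*} [HeytingAlgebra M] (S : PreModel M) : Prop :=
  IsEL3mModel S ∧ S.fbox ⊤ = ⊤ ∧ ∀ m : M, m ≠ ⊤ → S.fbox m = ⊥

/-- An `EL5`-model: an `EL5⁻`-model which additionally satisfies `fK m ≤ ¬¬m`. -/
def IsEL5Model {M : Type*} [HeytingAlgebra M] (S : PreModel M) : Prop :=
  IsEL5mModel S ∧ ∀ m : M, S.fK m ≤ (m ⇨ ⊥) ⇨ ⊥
/-- Canonical extension of an assignment `γ` to all formulas. -/
def evalFm {M : Type*} [HeytingAlgebra M] (S : PreModel M) (γ : Nat → M) : Fm → M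
  | .var n => γ n
  | .bot => ⊥
  | .and φ ψ => evalFm S γ φ ⊓ evalFm S γ ψ
  | .or φ ψ => evalFm S γ φ ⊔ evalFm S γ ψ
  | .imp φ ψ => evalFm S γ φ ⇨ evalFm S γ ψ
  | .box φ => S.fbox (evalFm S γ φ)
  | .k φ => S.fK (evalFm S γ φ)
/-- Algebraic models for the logic specified by `S`: the base conditions of a
model, together with the additional truth conditions corresponding to the axiom
schemes present in `S`. -/
def IsModelFor (S : LogicSpec) {M : Type*} [HeytingAlgebra M] (Mdl : PreModel M) : Prop :=
  IsUltraHFilter Mdl.TRUE ∧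
  (∀ m m' : M, Mdl.fbox (m ⊔ m') ≤ Mdl.fbox m ⊔ Mdl.fbox m') ∧
  (∀ m : M, Mdl.fbox m ≤ m) ∧
  (∀ m m' : M, Mdl.fbox (m ⇨ m') ≤ Mdl.fbox (Mdl.fbox m ⇨ Mdl.fbox m')) ∧
  (∀ m : M, Mdl.fbox m ∈ Mdl.TRUE ↔ m = ⊤) ∧
  (S.hasKBel → ∀ m m' : M, Mdl.fK (m ⇨ m') ≤ Mdl.fK m ⇨ Mdl.fK m') ∧
  (S.hasCoRe → ∀ m : M, Mdl.fbox m ≤ Mdl.fbox (Mdl.fK m)) ∧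
  (S.hasA4 → ∀ m : M, Mdl.fbox m ≤ Mdl.fbox (Mdl.fbox m)) ∧
  (S.hasA5 → Mdl.fbox ⊤ = ⊤ ∧ ∀ m : M, m ≠ ⊤ → Mdl.fbox m = ⊥) ∧
  (S.hasE4 → ∀ m : M, Mdl.fK m ≤ Mdl.fK (Mdl.fK m)) ∧
  (S.hasE5 → ∀ m : M, (Mdl.fK m ⇨ ⊥) ≤ Mdl.fK (Mdl.fK m ⇨ ⊥)) ∧
  (S.hasPNB → ∀ m : M, Mdl.fK m ≤ Mdl.fbox (Mdl.fK m)) ∧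
  (S.hasNNB → ∀ m : M, (Mdl.fK m ⇨ ⊥) ≤ Mdl.fbox (Mdl.fK m ⇨ ⊥)) ∧
  (S.hasIntRe → ∀ m : M, Mdl.fK m ≤ (m ⇨ ⊥) ⇨ ⊥)
/-- The raw data of an intuitionistic general frame: worlds, an accessibility
relation, a set `P` of propositions, a belief function `E` and a bottom world. -/
structure Frame (W : Type*) where
  R : W → W → Prop
  P : Set (Set W)
  E : W → Set (Set W)
  wbot : W

/-- The operation `A ⊃ B` on propositions. -/
def Frame.himp {W : Type*} (F : Frame W) (A B : Set W) : Set W :=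
  {w | ∀ w', F.R w w' → w' ∈ A → w' ∈ B}

/-- The operation `KA = {w | A ∈ E(w)}` on propositions. -/
def Frame.kset {W : Type*} (F : Frame W) (A : Set W) : Set W :=
  {w | A ∈ F.E w}

/-- `w` is an `R`-maximal world. -/
def Frame.IsMaxW {W : Type*} (F : Frame W) (w : W) : Prop :=
  ∀ w', F.R w w' → w' = w

/-- The basic frame conditions (of an `EL5⁻`-frame, except for the designated
maximal world): `R` is a partial order with least element `wbot` in which every
`R`-chain has an upper bound; `P` consists of upper sets, contains `∅` and `W`
and is closed under `∩`, `∪`, `⊃` and `K`; each `E(w)` is a filter on `P`; and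
`E` is monotone. -/
def IsBaseFrame {W : Type*} (F : Frame W) : Prop :=
  (∀ w, F.R w w) ∧
  (∀ ⦃w w' w''⦄, F.R w w' → F.R w' w'' → F.R w w'') ∧
  (∀ ⦃w w'⦄, F.R w w' → F.R w' w → w = w') ∧
  (∀ w, F.R F.wbot w) ∧
  (∀ C : Set W, IsChain F.R C → ∃ ub, ∀ w ∈ C, F.R w ub) ∧
  (∀ A ∈ F.P, ∀ ⦃w w'⦄, F.R w w' → w ∈ A → w' ∈ A) ∧
  (∅ : Set W) ∈ F.P ∧
  (Set.univ : Set W) ∈ F.P ∧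
  (∀ A ∈ F.P, ∀ B ∈ F.P, A ∩ B ∈ F.P) ∧
  (∀ A ∈ F.P, ∀ B ∈ F.P, A ∪ B ∈ F.P) ∧
  (∀ A ∈ F.P, ∀ B ∈ F.P, F.himp A B ∈ F.P) ∧
  (∀ A ∈ F.P, F.kset A ∈ F.P) ∧
  (∀ w, F.E w ⊆ F.P) ∧
  (∀ w, (F.E w).Nonempty) ∧
  (∀ w, ∀ A ∈ F.E w, ∀ B ∈ F.E w, A ∩ B ∈ F.E w) ∧
  (∀ w, ∀ A ∈ F.E w, ∀ B ∈ F.P, A ⊆ B → B ∈ F.E w) ∧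
  (∀ ⦃w w'⦄, F.R w w' → F.E w ⊆ F.E w')

/-- The `E4L5⁻`-frame condition: `A ∈ E(w)` implies `KA ∈ E(w)`. -/
def E4Cond {W : Type*} (F : Frame W) : Prop :=
  ∀ w, ∀ A ∈ F.P, A ∈ F.E w → F.kset A ∈ F.E w

/-- The `E5L5⁻`-frame condition: if `A ∉ E(w')` for all `w' ≥ w`,
then `(KA ⊃ ∅) ∈ E(w)`. -/
def E5Cond {W : Type*} (F : Frame W) : Prop :=
  ∀ w, ∀ A ∈ F.P, (∀ w', F.R w w' → A ∉ F.E w') → F.himp (F.kset A) ∅ ∈ F.E w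

/-- The `E6L5⁻`-frame condition: `E` is constant, i.e. `E(w) = E(wbot)` for all `w`. -/
def E6Cond {W : Type*} (F : Frame W) : Prop :=
  ∀ w, F.E w = F.E F.wbot

/-- The knowledge condition of `EkL5`-frames: every believed proposition
contains all accessible maximal worlds. -/
def KnowCond {W : Type*} (F : Frame W) : Prop :=
  ∀ w, ∀ A ∈ F.E w, ∀ w', F.R w w' → F.IsMaxW w' → w' ∈ A

/-- The condition (IntCo) of intuitionistic co-reflection: `w ∈ A` implies `A ∈ E(w)`. -/
def IntCoCond {W : Type*} (F : Frame W) : Prop :=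
  ∀ w, ∀ A ∈ F.P, w ∈ A → A ∈ F.E w

/-- An `IEL⁻`-frame: the basic frame conditions (no designated maximal world)
together with (IntCo). -/
def IsIELmFrame {W : Type*} (F : Frame W) : Prop := IsBaseFrame F ∧ IntCoCond F

/-- An `IEL`-frame: an `IEL⁻`-frame in which every believed proposition contains
all accessible maximal worlds. -/
def IsIELFrame {W : Type*} (F : Frame W) : Prop := IsIELmFrame F ∧ KnowCond F

/-- A frame with a designated world `wT`. -/
structure EFrame (W : Type*) extends Frame W where
  wT : W

/-- An `EL5⁻`-frame: the basic frame conditions together with maximality of the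
designated world `wT`. -/
def IsEL5mFrame {W : Type*} (F : EFrame W) : Prop :=
  IsBaseFrame F.toFrame ∧ F.toFrame.IsMaxW F.wT
/-- Interpretation of formulas in a frame under an assignment `g`:
`interpFm F g φ` is the set `φ* = {w | w ⊨ φ}`. -/
def interpFm {W : Type*} (F : Frame W) (g : Nat → Set W) : Fm → Set W
  | .var n => g n
  | .bot => ∅
  | .and φ ψ => interpFm F g φ ∩ interpFm F g ψ
  | .or φ ψ => interpFm F g φ ∪ interpFm F g ψ
  | .imp φ ψ => F.himp (interpFm F g φ) (interpFm F g ψ)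
  | .box φ => {_w | F.wbot ∈ interpFm F g φ}
  | .k φ => {w | interpFm F g φ ∈ F.E w}

/-- Frames for the S5-style logic specified by `S` (one of `EL5⁻`, `EL5`,
`EkL5⁻`, `EkL5` for k ∈ {4,5,6}). -/
def IsFrameFor (S : LogicSpec) {W : Type*} (F : EFrame W) : Prop :=
  IsEL5mFrame F ∧
  (S.hasE4 → E4Cond F.toFrame) ∧
  (S.hasE5 → E5Cond F.toFrame) ∧
  (S.hasPNB ∧ S.hasNNB → E6Cond F.toFrame) ∧
  (S.hasIntRe → KnowCond F.toFrame)

section Aux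
variable {H : Type*} [HeytingAlgebra H]

lemma top_mem_hfilter {F : Set H} (hF : IsHFilter F) : ⊤ ∈ F := by
  obtain ⟨⟨a, ha⟩, hup, _⟩ := hF
  exact hup ha le_top

lemma bot_not_mem_proper {F : Set H} (hF : IsProperHFilter F) : ⊥ ∉ F := by
  intro hb
  exact hF.2 (Set.eq_univ_of_forall fun x => hF.1.2.1 hb bot_le)

/-- The filter generated by `F ∪ {a}`. -/
def genF (F : Set H) (a : H) : Set H := {x | ∃ f ∈ F, f ⊓ a ≤ x}

lemma genF_isHFilter {F : Set H} (hF : IsHFilter F) (a : H) : IsHFilter (genF F a) := by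
  obtain ⟨⟨f0, hf0⟩, hup, hmeet⟩ := hF
  refine ⟨⟨f0 ⊓ a, f0, hf0, le_rfl⟩, ?_, ?_⟩
  · rintro x y ⟨f, hf, hle⟩ hxy; exact ⟨f, hf, hle.trans hxy⟩
  · rintro x y ⟨f, hf, hle⟩ ⟨g, hg, hle'⟩
    refine ⟨f ⊓ g, hmeet hf hg, ?_⟩
    exact le_inf (le_trans (inf_le_inf_right a inf_le_left) hle)
      (le_trans (inf_le_inf_right a inf_le_right) hle')

lemma subset_genF {F : Set H} (hF : IsHFilter F) (a : H) : F ⊆ genF F a :=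
  fun x hx => ⟨x, hx, inf_le_left⟩

lemma mem_genF {F : Set H} (hF : IsHFilter F) (a : H) : a ∈ genF F a :=
  ⟨⊤, top_mem_hfilter hF, by simp⟩

/-- Prime filter extension lemma. -/
lemma prime_extension {F : Set H} (hF : IsHFilter F) {b : H} (hb : b ∉ F) :
    ∃ G : Set H, IsPrimeHFilter G ∧ F ⊆ G ∧ b ∉ G := by
  have hzorn : ∀ c ⊆ {G : Set H | IsHFilter G ∧ b ∉ G}, IsChain (· ⊆ ·) c → c.Nonempty →
      ∃ ub ∈ {G : Set H | IsHFilter G ∧ b ∉ G}, ∀ s ∈ c, s ⊆ ub := by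
    intro c hc hchain hne
    obtain ⟨G0, hG0⟩ := hne
    have h1 : IsHFilter (⋃₀ c) := by
      refine ⟨⟨⊤, Set.mem_sUnion.2 ⟨G0, hG0, top_mem_hfilter (hc hG0).1⟩⟩, ?_, ?_⟩
      · rintro x y ⟨G, hG, hx⟩ hxy; exact ⟨G, hG, (hc hG).1.2.1 hx hxy⟩
      · rintro x y ⟨G1, hG1, hx⟩ ⟨G2, hG2, hy⟩
        rcases hchain.total hG1 hG2 with h12 | h21
        · exact ⟨G2, hG2, (hc hG2).1.2.2 (h12 hx) hy⟩
        · exact ⟨G1, hG1, (hc hG1).1.2.2 hx (h21 hy)⟩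
    have h2 : b ∉ ⋃₀ c := by rintro ⟨G, hG, hbG⟩; exact (hc hG).2 hbG
    exact ⟨⋃₀ c, ⟨h1, h2⟩, fun s hs => Set.subset_sUnion_of_mem hs⟩
  obtain ⟨G, hFG, hGm⟩ :=
    zorn_subset_nonempty {G : Set H | IsHFilter G ∧ b ∉ G} hzorn F ⟨hF, hb⟩
  obtain ⟨hGfil, hbG⟩ := hGm.prop
  have hGmax : ∀ G' : Set H, IsHFilter G' ∧ b ∉ G' → G ⊆ G' → G' ⊆ G :=
    fun G' hG' hsub => hGm.le_of_ge hG' hsub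
  have hproper : IsProperHFilter G := ⟨hGfil, fun h => hbG (h ▸ Set.mem_univ b)⟩
  refine ⟨G, ⟨hproper, ?_⟩, hFG, hbG⟩
  intro x y hxy
  by_contra hcon
  push_neg at hcon
  obtain ⟨hx, hy⟩ := hcon
  have hbx : b ∈ genF G x := by
    by_contra hbx
    exact hx (hGmax (genF G x) ⟨genF_isHFilter hGfil x, hbx⟩ (subset_genF hGfil x)
      (mem_genF hGfil x))
  have hby : b ∈ genF G y := by
    by_contra hby
    exact hy (hGmax (genF G y) ⟨genF_isHFilter hGfil y, hby⟩ (subset_genF hGfil y)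
      (mem_genF hGfil y))
  obtain ⟨f, hf, hfb⟩ := hbx
  obtain ⟨g, hg, hgb⟩ := hby
  have key : (f ⊓ g) ⊓ (x ⊔ y) ≤ b := by
    rw [inf_sup_left]
    exact sup_le (le_trans (inf_le_inf_right x inf_le_left) hfb)
      (le_trans (inf_le_inf_right y inf_le_right) hgb)
  exact hbG (hGfil.2.1 (hGfil.2.2 (hGfil.2.2 hf hg) hxy) key)

lemma le_of_primes {a b : H}
    (hab : ∀ G : Set H, IsPrimeHFilter G → a ∈ G → b ∈ G) : a ≤ b := by
  by_contra hle
  have hfil : IsHFilter {x : H | a ≤ x} :=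
    ⟨⟨a, le_rfl⟩, fun x y hx hxy => hx.trans hxy, fun x y hx hy => le_inf hx hy⟩
  obtain ⟨G, hG, hFG, hbG⟩ := prime_extension hfil (b := b) hle
  exact hbG (hab G hG (hFG le_rfl))

lemma ultra_isPrime {F : Set H} (hF : IsUltraHFilter F) : IsPrimeHFilter F := by
  obtain ⟨hproper, hmax⟩ := hF
  refine ⟨hproper, fun a b hab => ?_⟩
  by_contra hcon
  push_neg at hcon
  obtain ⟨ha, hb⟩ := hcon
  have hbotmem : ∀ x : H, x ∉ F → ⊥ ∈ genF F x := by
    intro x hx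
    by_contra hbot'
    have hprop : IsProperHFilter (genF F x) := by
      refine ⟨genF_isHFilter hproper.1 x, fun heq => hbot' ?_⟩
      rw [heq]; exact Set.mem_univ _
    have := hmax _ hprop (subset_genF hproper.1 x)
    exact hx (this ▸ mem_genF hproper.1 x)
  obtain ⟨f, hf, hfb⟩ := hbotmem a ha
  obtain ⟨g, hg, hgb⟩ := hbotmem b hb
  have key : (f ⊓ g) ⊓ (a ⊔ b) ≤ ⊥ := by
    rw [inf_sup_left]
    exact sup_le (le_trans (inf_le_inf_right a inf_le_left) hfb)
      (le_trans (inf_le_inf_right b inf_le_right) hgb)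
  exact bot_not_mem_proper hproper
    (hproper.1.2.1 (hproper.1.2.2 (hproper.1.2.2 hf hg) hab) key)

end Aux

/-- Let `𝓛 ∈ {EL5⁻, EL5, EkL5⁻, EkL5 | k ∈ {4,5,6}}` and let
`(M,γ)` be an algebraic `𝓛`-interpretation.  Then there is a relational model
`(F,g)` based on an `𝓛`-frame satisfying exactly the same formulas. -/
theorem stmt15 (S : LogicSpec) (hS : S ∈ L5Logics)
    (M : Type) [HeytingAlgebra M] (Mdl : PreModel M) (γ : Nat → M)
    (h : IsModelFor S Mdl) :
    ∃ (W : Type) (F : EFrame W) (g : Nat → Set W),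
      IsFrameFor S F ∧ (∀ n, g n ∈ F.P) ∧
      ∀ φ : Fm, (evalFm Mdl γ φ ∈ Mdl.TRUE ↔ F.wT ∈ interpFm F.toFrame g φ) := by
  classical
  have hfields : S.hasKBel ∧ S.hasCoRe ∧ S.hasA5 := by
    simp only [L5Logics, Set.mem_insert_iff, Set.mem_singleton_iff] at hS
    rcases hS with h'|h'|h'|h'|h'|h'|h'|h' <;> subst h' <;>
      exact ⟨trivial, trivial, Nat.le_refl 5⟩
  obtain ⟨hKBel, hCoRe, hA5⟩ := hfields
  obtain ⟨hUltra, hA1, hA2, hA3, hBoxT, hKB', hCR', hA4', hA5', hE4', hE5',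
    hPNB', hNNB', hIR'⟩ := h
  have hKB := hKB' hKBel
  have hCR := hCR' hCoRe
  obtain ⟨hboxtop, hboxbot⟩ := hA5' hA5
  have hTprime : IsPrimeHFilter Mdl.TRUE := ultra_isPrime hUltra
  have hTfil : IsHFilter Mdl.TRUE := hTprime.1.1
  have hBT : (⊥ : M) ≠ ⊤ := by
    intro hbt
    exact bot_not_mem_proper hTprime.1 (hbt ▸ top_mem_hfilter hTfil)
  have hdisj : ∀ m n : M, m ⊔ n = ⊤ → m = ⊤ ∨ n = ⊤ := by
    intro m n hmn
    have h1 : Mdl.fbox (m ⊔ n) ∈ Mdl.TRUE := (hBoxT _).2 hmn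
    have h2 : Mdl.fbox m ⊔ Mdl.fbox n ∈ Mdl.TRUE := hTfil.2.1 h1 (hA1 m n)
    rcases hTprime.2 _ _ h2 with h3 | h3
    · exact Or.inl ((hBoxT m).1 h3)
    · exact Or.inr ((hBoxT n).1 h3)
  have hfKtop : Mdl.fK (⊤ : M) = ⊤ := by
    have h2 : Mdl.fbox ⊤ ≤ Mdl.fK ⊤ := (hCR ⊤).trans (hA2 _)
    rw [hboxtop] at h2
    exact le_antisymm le_top h2
  have hfKmono : ∀ {m n : M}, m ≤ n → Mdl.fK m ≤ Mdl.fK n := by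
    intro m n hmn
    have h1 : (m ⇨ n) = ⊤ := himp_eq_top_iff.mpr hmn
    have h2 := hKB m n
    rw [h1, hfKtop] at h2
    exact himp_eq_top_iff.mp (top_le_iff.mp h2)
  have hfKinf : ∀ m n : M, Mdl.fK m ⊓ Mdl.fK n ≤ Mdl.fK (m ⊓ n) := by
    intro m n
    have h1 : m ≤ n ⇨ m ⊓ n := le_himp_iff.mpr le_rfl
    exact le_himp_iff.mp ((hfKmono h1).trans (hKB n (m ⊓ n)))
  have hbotprime : IsPrimeHFilter ({⊤} : Set M) := by
    refine ⟨⟨⟨⟨⊤, rfl⟩, ?_, ?_⟩, ?_⟩, ?_⟩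
    · intro a b ha hab
      rw [Set.mem_singleton_iff] at ha ⊢
      subst ha
      exact top_le_iff.mp hab
    · intro a b ha hb
      rw [Set.mem_singleton_iff] at ha hb ⊢
      rw [ha, hb, inf_top_eq]
    · intro hcon
      have : (⊥ : M) ∈ ({⊤} : Set M) := hcon ▸ Set.mem_univ _
      exact hBT (Set.mem_singleton_iff.mp this)
    · intro a b hab
      rw [Set.mem_singleton_iff] at hab
      simpa [Set.mem_singleton_iff] using hdisj a b hab
  -- the world type: prime filters of M
  let W : Type := {w : Set M // IsPrimeHFilter w}
  let hat : M → Set W := fun m => {w : W | m ∈ w.1}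
  let Fr : EFrame W :=
    { R := fun w w' => w.1 ⊆ w'.1
      P := Set.range hat
      E := fun w => {A | ∃ m, Mdl.fK m ∈ w.1 ∧ A = hat m}
      wbot := ⟨{⊤}, hbotprime⟩
      wT := ⟨Mdl.TRUE, hTprime⟩ }
  have hhat_mono : ∀ {m n : M}, m ≤ n → hat m ⊆ hat n :=
    fun hmn w hw => w.2.1.1.2.1 hw hmn
  have hhat_le : ∀ {m n : M}, hat m ⊆ hat n → m ≤ n := by
    intro m n hsub
    apply le_of_primes
    intro G hG hmG
    exact hsub (show (⟨G, hG⟩ : W) ∈ hat m from hmG)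
  have hat_bot : hat ⊥ = (∅ : Set W) := by
    ext w
    simp only [hat, Set.mem_setOf_eq, Set.mem_empty_iff_false, iff_false]
    exact bot_not_mem_proper w.2.1
  have hat_top : hat ⊤ = (Set.univ : Set W) := by
    ext w
    simp only [hat, Set.mem_setOf_eq, Set.mem_univ, iff_true]
    exact top_mem_hfilter w.2.1.1
  have hat_inf : ∀ m n : M, hat (m ⊓ n) = hat m ∩ hat n := by
    intro m n
    ext w
    simp only [hat, Set.mem_setOf_eq, Set.mem_inter_iff]
    exact ⟨fun hw => ⟨w.2.1.1.2.1 hw inf_le_left, w.2.1.1.2.1 hw inf_le_right⟩,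
      fun ⟨h1, h2⟩ => w.2.1.1.2.2 h1 h2⟩
  have hat_sup : ∀ m n : M, hat (m ⊔ n) = hat m ∪ hat n := by
    intro m n
    ext w
    simp only [hat, Set.mem_setOf_eq, Set.mem_union]
    exact ⟨fun hw => w.2.2 m n hw,
      fun hw => hw.elim (fun h1 => w.2.1.1.2.1 h1 le_sup_left)
        (fun h1 => w.2.1.1.2.1 h1 le_sup_right)⟩
  have hat_himp : ∀ m n : M, Fr.toFrame.himp (hat m) (hat n) = hat (m ⇨ n) := by
    intro m n
    ext w
    simp only [Frame.himp, hat, Set.mem_setOf_eq]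
    constructor
    · intro hw
      by_cases hn : n ∈ genF w.1 m
      · obtain ⟨f, hf, hfn⟩ := hn
        exact w.2.1.1.2.1 hf (le_himp_iff.mpr hfn)
      · obtain ⟨G, hG, hsub, hnG⟩ := prime_extension (genF_isHFilter w.2.1.1 m) hn
        exact absurd (hw ⟨G, hG⟩ (fun x hx => hsub (subset_genF w.2.1.1 m hx))
          (hsub (mem_genF w.2.1.1 m))) hnG
    · intro hw w' hww' hm
      exact w'.2.1.1.2.1 (w'.2.1.1.2.2 (hww' hw) hm) himp_inf_le
  have hEchar : ∀ (m : M) (w : W), hat m ∈ Fr.toFrame.E w ↔ Mdl.fK m ∈ w.1 := by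
    intro m w
    constructor
    · rintro ⟨m', hm', heq⟩
      have hle : m' ≤ m := hhat_le (heq ▸ subset_rfl)
      exact w.2.1.1.2.1 hm' (hfKmono hle)
    · intro hm
      exact ⟨m, hm, rfl⟩
  have hkset : ∀ m : M, Fr.toFrame.kset (hat m) = hat (Mdl.fK m) := by
    intro m
    ext w
    exact hEchar m w
  refine ⟨W, Fr, fun n => hat (γ n), ⟨⟨?_, ?_⟩, ?_, ?_, ?_, ?_⟩,
    fun n => ⟨γ n, rfl⟩, ?_⟩
  · -- IsBaseFrame
    refine ⟨fun w => subset_rfl, fun w w' w'' h1 h2 => h1.trans h2,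
      fun w w' h1 h2 => Subtype.ext (le_antisymm h1 h2), ?_, ?_, ?_,
      ⟨⊥, hat_bot⟩, ⟨⊤, hat_top⟩, ?_, ?_, ?_, ?_, ?_, ?_, ?_, ?_, ?_⟩
    · -- wbot least
      intro w x hx
      rw [Set.mem_singleton_iff] at hx
      subst hx
      exact top_mem_hfilter w.2.1.1
    · -- chains
      intro C hC
      rcases Set.eq_empty_or_nonempty C with hCe | ⟨w0, hw0⟩
      · exact ⟨Fr.wbot, by simp [hCe]⟩
      · refine ⟨⟨{m : M | ∃ w ∈ C, m ∈ w.1}, ?_⟩, fun w hw x hx => ⟨w, hw, hx⟩⟩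
        have htot : ∀ w1 ∈ C, ∀ w2 ∈ C, w1.1 ⊆ w2.1 ∨ w2.1 ⊆ w1.1 := by
          intro w1 h1 w2 h2
          by_cases heq : w1 = w2
          · exact Or.inl (heq ▸ subset_rfl)
          · exact hC h1 h2 heq
        refine ⟨⟨⟨⟨⊤, w0, hw0, top_mem_hfilter w0.2.1.1⟩, ?_, ?_⟩, ?_⟩, ?_⟩
        · rintro a b ⟨w, hw, ha⟩ hab
          exact ⟨w, hw, w.2.1.1.2.1 ha hab⟩
        · rintro a b ⟨w1, hw1, ha⟩ ⟨w2, hw2, hb⟩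
          rcases htot w1 hw1 w2 hw2 with hsub | hsub
          · exact ⟨w2, hw2, w2.2.1.1.2.2 (hsub ha) hb⟩
          · exact ⟨w1, hw1, w1.2.1.1.2.2 ha (hsub hb)⟩
        · intro hcon
          have : (⊥ : M) ∈ {m : M | ∃ w ∈ C, m ∈ w.1} := hcon ▸ Set.mem_univ _
          obtain ⟨w, _, hbw⟩ := this
          exact bot_not_mem_proper w.2.1 hbw
        · rintro a b ⟨w, hw, hab⟩
          rcases w.2.2 a b hab with h1 | h1
          · exact Or.inl ⟨w, hw, h1⟩
          · exact Or.inr ⟨w, hw, h1⟩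
    · -- upper sets
      rintro A ⟨m, rfl⟩ w w' hww' hw
      exact hww' hw
    · -- ∩
      rintro A ⟨m, rfl⟩ B ⟨n, rfl⟩
      exact ⟨m ⊓ n, hat_inf m n⟩
    · -- ∪
      rintro A ⟨m, rfl⟩ B ⟨n, rfl⟩
      exact ⟨m ⊔ n, hat_sup m n⟩
    · -- himp
      rintro A ⟨m, rfl⟩ B ⟨n, rfl⟩
      exact ⟨m ⇨ n, (hat_himp m n).symm⟩
    · -- kset
      rintro A ⟨m, rfl⟩
      exact ⟨Mdl.fK m, (hkset m).symm⟩
    · -- E ⊆ P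
      rintro w A ⟨m, hm, rfl⟩
      exact ⟨m, rfl⟩
    · -- E nonempty
      intro w
      exact ⟨hat ⊤, ⊤, by rw [hfKtop]; exact top_mem_hfilter w.2.1.1, rfl⟩
    · -- E meets
      rintro w A ⟨m, hm, rfl⟩ B ⟨n, hn, rfl⟩
      exact ⟨m ⊓ n, w.2.1.1.2.1 (w.2.1.1.2.2 hm hn) (hfKinf m n), (hat_inf m n).symm⟩
    · -- E upward in P
      rintro w A ⟨m, hm, rfl⟩ B ⟨n, rfl⟩ hAB
      exact ⟨n, w.2.1.1.2.1 hm (hfKmono (hhat_le hAB)), rfl⟩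
    · -- E monotone
      rintro w w' hww' A ⟨m, hm, rfl⟩
      exact ⟨m, hww' hm, rfl⟩
  · -- wT maximal
    intro w' hw'
    exact Subtype.ext (hUltra.2 w'.1 w'.2.1 hw')
  · -- E4
    intro hE4
    have hE4m := hE4' hE4
    rintro w A hAP ⟨m, hm, rfl⟩
    rw [hkset m]
    exact ⟨Mdl.fK m, w.2.1.1.2.1 hm (hE4m m), rfl⟩
  · -- E5
    intro hE5
    have hE5m := hE5' hE5
    rintro w A ⟨m, rfl⟩ hnot
    have h1 : w ∈ Fr.toFrame.himp (hat (Mdl.fK m)) (hat ⊥) := by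
      intro w' hww' hm'
      exact absurd ((hEchar m w').mpr hm') (hnot w' hww')
    rw [hat_himp] at h1
    have h2 : Mdl.fK (Mdl.fK m ⇨ ⊥) ∈ w.1 := w.2.1.1.2.1 h1 (hE5m m)
    refine ⟨Mdl.fK m ⇨ ⊥, h2, ?_⟩
    rw [hkset m, ← hat_himp, hat_bot]
  · -- E6
    rintro ⟨hPNB, _⟩
    have hPNBm := hPNB' hPNB
    intro w
    ext A
    constructor
    · rintro ⟨m, hm, rfl⟩
      have hKm : Mdl.fK m = ⊤ := by
        by_contra hne
        have hb : Mdl.fbox (Mdl.fK m) = ⊥ := hboxbot _ hne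
        have : Mdl.fK m ≤ ⊥ := hb ▸ hPNBm m
        exact bot_not_mem_proper w.2.1 (w.2.1.1.2.1 hm (le_bot_iff.mp this ▸ le_rfl))
      exact ⟨m, by rw [hKm]; exact rfl, rfl⟩
    · rintro ⟨m, hm, rfl⟩
      rw [Set.mem_singleton_iff] at hm
      exact ⟨m, by rw [hm]; exact top_mem_hfilter w.2.1.1, rfl⟩
  · -- KnowCond
    intro hIntRe
    have hIRm := hIR' hIntRe
    rintro w A ⟨m, hm, rfl⟩ w' hww' hmax
    have hKm : Mdl.fK m ∈ w'.1 := hww' hm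
    have hnn : ((m ⇨ ⊥) ⇨ ⊥) ∈ w'.1 := w'.2.1.1.2.1 hKm (hIRm m)
    show m ∈ w'.1
    by_contra hmem
    by_cases hbot : (⊥ : M) ∈ genF w'.1 m
    · obtain ⟨f, hf, hle⟩ := hbot
      have h3 : (m ⇨ ⊥) ∈ w'.1 := w'.2.1.1.2.1 hf (le_himp_iff.mpr hle)
      exact bot_not_mem_proper w'.2.1 (w'.2.1.1.2.1 (w'.2.1.1.2.2 hnn h3) himp_inf_le)
    · obtain ⟨G, hG, hsub, _⟩ := prime_extension (genF_isHFilter w'.2.1.1 m) hbot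
      have h4 : Fr.toFrame.R w' ⟨G, hG⟩ := fun x hx => hsub (subset_genF w'.2.1.1 m hx)
      have h5 := hmax ⟨G, hG⟩ h4
      have h6 : m ∈ w'.1 := by
        have : m ∈ G := hsub (mem_genF w'.2.1.1 m)
        rw [← h5]
        exact this
      exact hmem h6
  · -- the semantic equivalence
    have hinterp : ∀ φ : Fm,
        interpFm Fr.toFrame (fun n => hat (γ n)) φ = hat (evalFm Mdl γ φ) := by
      intro φ
      induction φ with
      | var n => rfl
      | bot => exact hat_bot.symm
      | and φ ψ ihφ ihψ => rw [interpFm, evalFm, ihφ, ihψ, hat_inf]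
      | or φ ψ ihφ ihψ => rw [interpFm, evalFm, ihφ, ihψ, hat_sup]
      | imp φ ψ ihφ ihψ => rw [interpFm, evalFm, ihφ, ihψ, hat_himp]
      | box φ ih =>
        rw [interpFm, evalFm, ih]
        by_cases he : evalFm Mdl γ φ = ⊤
        · have hb : Mdl.fbox (evalFm Mdl γ φ) = ⊤ := by rw [he, hboxtop]
          rw [hb, hat_top]
          ext w
          simp only [Set.mem_setOf_eq, Set.mem_univ, iff_true]
          show evalFm Mdl γ φ ∈ ({⊤} : Set M)
          rw [he]
          exact rfl
        · have hb : Mdl.fbox (evalFm Mdl γ φ) = ⊥ := hboxbot _ he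
          rw [hb, hat_bot]
          ext w
          simp only [Set.mem_setOf_eq, Set.mem_empty_iff_false, iff_false]
          intro hw
          exact he (Set.mem_singleton_iff.mp hw)
      | k φ ih =>
        rw [interpFm, evalFm, ih]
        exact hkset _
    intro φ
    rw [hinterp φ]
    exact Iff.rfl
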